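/- Additivity of mutual information for a memoryless channel under product input PMFs: for a probability vector p ∈ ℝ^m and n ∈ ℕ, with joint conditional densities h_v(y) = Π_{k=1}^n h_{v_k}(y_k) on ℂ^n for v ∈ {1,…,m}^n, and joint output density q^{(n)}(y) = Π_{k=1}^n q_p(y_k), one has Σ_{v ∈ {1,…,m}^n} ( Π_{k=1}^n p_{v_k} ) ∫_{ℂ^n} h_v(y) log( h_v(y) / q^{(n)}(y) ) dμ^n(y) = n Σ_{i=1}^m p_i ∫_ℂ h_i(y) log( h_i(y) / q_p(y) ) dμ(y), where μ^n is the n-fold product of μ. -/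

import Mathlib

open MeasureTheory

lemma aux_integral_prod (μ : Measure ℂ) [SigmaFinite μ] {n : ℕ} (f : Fin n → ℂ → ℝ) :
    ∫ y : Fin n → ℂ, ∏ k, f k (y k) ∂(Measure.pi fun _ : Fin n => μ) = ∏ k, ∫ y, f k y ∂μ := by
  letI : MeasureSpace ℂ := ⟨μ⟩
  letI : SigmaFinite (volume : Measure ℂ) := ‹SigmaFinite μ›
  exact MeasureTheory.integral_fin_nat_prod_eq_prod f

lemma aux_integrable_prod (μ : Measure ℂ) [SigmaFinite μ] {n : ℕ} {f : Fin n → ℂ → ℝ}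
    (hf : ∀ k, Integrable (f k) μ) :
    Integrable (fun y : Fin n → ℂ => ∏ k, f k (y k)) (Measure.pi fun _ : Fin n => μ) := by
  letI : MeasureSpace ℂ := ⟨μ⟩
  letI : SigmaFinite (volume : Measure ℂ) := ‹SigmaFinite μ›
  exact Integrable.fin_nat_prod hf

/-- Additivity of mutual information for a memoryless channel under
product input PMFs: with joint conditional densities `h_v(y) = ∏ k, h (v k) (y k)` and
joint output density `q⁽ⁿ⁾(y) = ∏ k, q_p (y k)`, the block mutual information equals
`n` times the single-letter mutual information. -/
theorem product_pmf_mutual_information_additive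
    (μ : Measure ℂ) [SigmaFinite μ] (m n : ℕ) (h : Fin m → ℂ → ℝ)
    (hmeas : ∀ i, Measurable (h i))
    (hnonneg : ∀ i y, 0 ≤ h i y)
    (hdens : ∀ i, ∫ y, h i y ∂μ = 1)
    (p : Fin m → ℝ) (hp0 : ∀ i, 0 ≤ p i) (hp1 : (∑ i, p i) = 1)
    (hq_pos : ∀ᵐ y ∂μ, 0 < ∑ i, p i * h i y)
    (hint_hh : ∀ i, 0 < p i → Integrable (fun y => h i y * Real.log (h i y)) μ)
    (hint_hq : ∀ i, 0 < p i →
      Integrable (fun y => h i y * Real.log (∑ j, p j * h j y)) μ) :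
    ∑ v : Fin n → Fin m, (∏ k, p (v k)) *
        ∫ y : Fin n → ℂ,
          (∏ k, h (v k) (y k)) *
            Real.log ((∏ k, h (v k) (y k)) / ∏ k, (∑ i, p i * h i (y k)))
          ∂(Measure.pi fun _ : Fin n => μ)
      = n * ∑ i, p i * ∫ y, h i y * Real.log (h i y / (∑ j, p j * h j y)) ∂μ := by
  set q : ℂ → ℝ := fun y => ∑ j, p j * h j y with hqdef
  set I : Fin m → ℝ := fun i => ∫ y, h i y * Real.log (h i y / q y) ∂μ with hIdef
  -- integrability of each h i
  have hint_h : ∀ i, Integrable (h i) μ := by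
    intro i
    by_contra hcon
    have hd := hdens i
    rw [integral_undef hcon] at hd
    exact one_ne_zero hd.symm
  -- integrability of h i * log(h i / q)
  have hint_ratio : ∀ i, 0 < p i →
      Integrable (fun y => h i y * Real.log (h i y / q y)) μ := by
    intro i hi
    apply (((hint_hh i hi).sub (hint_hq i hi)).congr)
    filter_upwards [hq_pos] with y hy
    rcases eq_or_lt_of_le (hnonneg i y) with h0 | h0
    · simp [← h0]
    · simp only [Pi.sub_apply]
      rw [Real.log_div (ne_of_gt h0) (ne_of_gt hy)]; ring
  -- Step A : for good v, the block integral is the sum of single-letter ones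
  have stepA : ∀ v : Fin n → Fin m, (∀ k, 0 < p (v k)) →
      (∫ y : Fin n → ℂ,
          (∏ k, h (v k) (y k)) *
            Real.log ((∏ k, h (v k) (y k)) / ∏ k, q (y k))
          ∂(Measure.pi fun _ : Fin n => μ)) = ∑ k, I (v k) := by
    intro v hv
    set g : Fin n → Fin n → ℂ → ℝ :=
      fun k j x => if j = k then h (v k) x * Real.log (h (v k) x / q x) else h (v j) x with hgdef
    have hgint : ∀ k j, Integrable (g k j) μ := by
      intro k j
      by_cases hjk : j = k
      · subst hjk; simpa [hgdef] using hint_ratio (v j) (hv j)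
      · simpa [hgdef, hjk] using hint_h (v j)
    have hqpi : ∀ᵐ y : Fin n → ℂ ∂(Measure.pi fun _ : Fin n => μ), ∀ k, 0 < q (y k) := by
      rw [MeasureTheory.ae_all_iff]
      intro k
      exact (Measure.tendsto_eval_ae_ae (μ := fun _ : Fin n => μ) (i := k)).eventually hq_pos
    have key : ∫ y : Fin n → ℂ,
          (∏ k, h (v k) (y k)) * Real.log ((∏ k, h (v k) (y k)) / ∏ k, q (y k))
          ∂(Measure.pi fun _ : Fin n => μ)
        = ∫ y : Fin n → ℂ, ∑ k, ∏ j, g k j (y j) ∂(Measure.pi fun _ : Fin n => μ) := by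
      apply integral_congr_ae
      filter_upwards [hqpi] with y hy
      by_cases hzero : ∀ k, 0 < h (v k) (y k)
      · have hlog : Real.log ((∏ k, h (v k) (y k)) / ∏ k, q (y k))
            = ∑ k, Real.log (h (v k) (y k) / q (y k)) := by
          rw [← Finset.prod_div_distrib]
          exact Real.log_prod fun k _ => div_ne_zero (ne_of_gt (hzero k)) (ne_of_gt (hy k))
        rw [hlog, Finset.mul_sum]
        refine Finset.sum_congr rfl fun k _ => ?_
        rw [← Finset.mul_prod_erase Finset.univ _ (Finset.mem_univ k),
            ← Finset.mul_prod_erase Finset.univ (fun j => g k j (y j)) (Finset.mem_univ k)]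
        have herase : ∏ j ∈ Finset.univ.erase k, g k j (y j)
            = ∏ j ∈ Finset.univ.erase k, h (v j) (y j) := by
          refine Finset.prod_congr rfl fun j hj => ?_
          simp [hgdef, (Finset.mem_erase.1 hj).1]
        rw [herase]
        simp only [hgdef, if_pos rfl]
        ring
      · push_neg at hzero
        obtain ⟨k0, hk0⟩ := hzero
        have hz : h (v k0) (y k0) = 0 := le_antisymm hk0 (hnonneg _ _)
        rw [Finset.prod_eq_zero (Finset.mem_univ k0) hz, zero_mul]
        symm
        refine Finset.sum_eq_zero fun k _ => ?_
        refine Finset.prod_eq_zero (Finset.mem_univ k0) ?_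
        by_cases hkk : k0 = k
        · subst hkk; simp [hgdef, hz]
        · simp [hgdef, hkk, hz]
    rw [key, integral_finset_sum _ fun k _ => aux_integrable_prod μ (hgint k)]
    refine Finset.sum_congr rfl fun k _ => ?_
    rw [aux_integral_prod,
        ← Finset.mul_prod_erase Finset.univ (fun j => ∫ x, g k j x ∂μ) (Finset.mem_univ k)]
    have herase : ∏ j ∈ Finset.univ.erase k, (∫ x, g k j x ∂μ)
        = ∏ j ∈ Finset.univ.erase k, (1 : ℝ) := by
      refine Finset.prod_congr rfl fun j hj => ?_
      have : g k j = h (v j) := by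
        funext x; simp [hgdef, (Finset.mem_erase.1 hj).1]
      rw [this, hdens]
    rw [herase, Finset.prod_const_one, mul_one]
    simp [hgdef, hIdef]
  -- rewrite each term of the LHS
  have step1 : ∑ v : Fin n → Fin m, (∏ k, p (v k)) *
        (∫ y : Fin n → ℂ,
          (∏ k, h (v k) (y k)) *
            Real.log ((∏ k, h (v k) (y k)) / ∏ k, q (y k))
          ∂(Measure.pi fun _ : Fin n => μ))
      = ∑ v : Fin n → Fin m, (∏ k, p (v k)) * ∑ k, I (v k) := by
    refine Finset.sum_congr rfl fun v _ => ?_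
    by_cases hv : ∀ k, 0 < p (v k)
    · rw [stepA v hv]
    · push_neg at hv
      obtain ⟨k0, hk0⟩ := hv
      have : p (v k0) = 0 := le_antisymm hk0 (hp0 _)
      rw [Finset.prod_eq_zero (Finset.mem_univ k0) this, zero_mul, zero_mul]
  rw [step1]
  -- Step B: marginalize
  have step2 : ∀ v : Fin n → Fin m, (∏ k, p (v k)) * ∑ k, I (v k)
      = ∑ k, ∏ j, (if j = k then p (v j) * I (v j) else p (v j)) := by
    intro v
    rw [Finset.mul_sum]
    refine Finset.sum_congr rfl fun k _ => ?_
    rw [← Finset.mul_prod_erase Finset.univ (fun j => p (v j)) (Finset.mem_univ k),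
        ← Finset.mul_prod_erase Finset.univ
          (fun j => if j = k then p (v j) * I (v j) else p (v j)) (Finset.mem_univ k)]
    have herase : ∏ j ∈ Finset.univ.erase k, (if j = k then p (v j) * I (v j) else p (v j))
        = ∏ j ∈ Finset.univ.erase k, p (v j) := by
      refine Finset.prod_congr rfl fun j hj => ?_
      simp [(Finset.mem_erase.1 hj).1]
    rw [herase, if_pos rfl]
    ring
  simp_rw [step2]
  rw [Finset.sum_comm]
  have step3 : ∀ k : Fin n,
      (∑ v : Fin n → Fin m, ∏ j, (if j = k then p (v j) * I (v j) else p (v j)))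
      = ∑ i, p i * I i := by
    intro k
    rw [← Fintype.prod_sum (fun j (i : Fin m) => if j = k then p i * I i else p i)]
    rw [← Finset.mul_prod_erase Finset.univ
        (fun j => ∑ i, (if j = k then p i * I i else p i)) (Finset.mem_univ k)]
    have herase : ∏ j ∈ Finset.univ.erase k, (∑ i, (if j = k then p i * I i else p i))
        = ∏ j ∈ Finset.univ.erase k, (1 : ℝ) := by
      refine Finset.prod_congr rfl fun j hj => ?_
      simp [(Finset.mem_erase.1 hj).1, hp1]
    rw [herase, Finset.prod_const_one, mul_one]
    simp
  simp_rw [step3]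
  rw [Finset.sum_const, Finset.card_univ, Fintype.card_fin, nsmul_eq_mul]
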